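/- arXiv:2501.15156 — 7 statements merged into one kernel-verified Lean document; each statement's English description precedes it below -/
import Mathlib

section
/- Let L₁, L₂, U₁, U₂ be finite sets of rational numbers and let S = {q ∈ ℚ | (∀ a ∈ L₁, a < q) ∧ (∀ a ∈ L₂, a ≤ q) ∧ (∀ b ∈ U₁, q < b) ∧ (∀ b ∈ U₂, q ≤ b)}. If S is nonempty, then in the extended reals, ⨆ q ∈ S, (q : EReal) = ⨅ b ∈ U₁ ∪ U₂, (b : EReal), where the infimum over the empty set is +∞. -/
theorem sup_feasible_eq_min_upper_bounds (L₁ L₂ U₁ U₂ : Finset ℚ)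
    (S : Set ℚ)
    (hS : S = {q : ℚ | (∀ a ∈ L₁, a < q) ∧ (∀ a ∈ L₂, a ≤ q) ∧
      (∀ b ∈ U₁, q < b) ∧ (∀ b ∈ U₂, q ≤ b)})
    (hne : S.Nonempty) :
    ⨆ q ∈ S, ((q : ℝ) : EReal) = ⨅ b ∈ (U₁ ∪ U₂ : Finset ℚ), ((b : ℝ) : EReal) := by
  obtain ⟨x, hx⟩ := hne
  rw [hS] at hx
  obtain ⟨hx1, hx2, hx3, hx4⟩ := hx
  have key : ∀ q : ℚ, q ∈ S → ((q:ℝ) : EReal) ≤ ⨆ q ∈ S, ((q:ℝ):EReal) := fun q hq =>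
    le_iSup₂ (f := fun (q : ℚ) (_ : q ∈ S) => ((q:ℝ):EReal)) q hq
  apply le_antisymm
  · apply iSup₂_le
    intro q hq
    rw [hS] at hq
    obtain ⟨-, -, h3, h4⟩ := hq
    apply le_iInf₂
    intro b hb
    rcases Finset.mem_union.mp hb with hb | hb
    · exact_mod_cast (h3 b hb).le
    · exact_mod_cast h4 b hb
  · apply le_of_forall_lt
    intro c hc
    have hxS : x ∈ S := by rw [hS]; exact ⟨hx1, hx2, hx3, hx4⟩
    induction c with
    | bot =>
      calc (⊥:EReal) < ((x:ℝ):EReal) := EReal.bot_lt_coe _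
        _ ≤ _ := key x hxS
    | coe r =>
      have hcb : ∀ b ∈ U₁ ∪ U₂, r < (b:ℝ) := by
        intro b hb
        have := lt_of_lt_of_le hc (iInf₂_le b hb)
        exact_mod_cast this
      by_cases hU : (U₁ ∪ U₂ : Finset ℚ).Nonempty
      · set m := (U₁ ∪ U₂).min' hU with hm
        have hrm : r < ((m:ℚ):ℝ) := hcb _ ((U₁ ∪ U₂).min'_mem hU)
        obtain ⟨q, hq1, hq2⟩ := exists_rat_btwn hrm
        have hqm : q < m := by exact_mod_cast hq2
        set q' := max x q with hq'
        have hq'S : q' ∈ S := by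
          rw [hS]
          refine ⟨fun a ha => lt_of_lt_of_le (hx1 a ha) (le_max_left _ _),
            fun a ha => le_trans (hx2 a ha) (le_max_left _ _),
            fun b hb => max_lt (hx3 b hb)
              (lt_of_lt_of_le hqm ((U₁ ∪ U₂).min'_le b (Finset.mem_union_left _ hb))),
            fun b hb => max_le (hx4 b hb)
              (le_trans hqm.le ((U₁ ∪ U₂).min'_le b (Finset.mem_union_right _ hb)))⟩
        have hrq' : r < ((q':ℚ):ℝ) :=
          lt_of_lt_of_le hq1 (by exact_mod_cast le_max_right x q)
        calc (r : EReal) < ((q':ℝ):EReal) := by exact_mod_cast hrq'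
          _ ≤ _ := key q' hq'S
      · obtain ⟨q, hq⟩ := exists_rat_gt r
        set q' := max x q with hq'd
        have hq'S : q' ∈ S := by
          rw [Finset.not_nonempty_iff_eq_empty, Finset.union_eq_empty] at hU
          rw [hS]
          refine ⟨fun a ha => lt_of_lt_of_le (hx1 a ha) (le_max_left _ _),
            fun a ha => le_trans (hx2 a ha) (le_max_left _ _),
            fun b hb => absurd hb (by simp [hU.1]),
            fun b hb => absurd hb (by simp [hU.2])⟩
        have hrq' : r < ((q':ℚ):ℝ) :=
          lt_of_lt_of_le hq (by exact_mod_cast le_max_right x q)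
        calc (r : EReal) < ((q':ℝ):EReal) := by exact_mod_cast hrq'
          _ ≤ _ := key q' hq'S
    | top => exact absurd hc not_top_lt
end

section
/- Let L₁, L₂, U₁, U₂ be finite sets of rational numbers and let S = {q ∈ ℚ | (∀ a ∈ L₁, a < q) ∧ (∀ a ∈ L₂, a ≤ q) ∧ (∀ b ∈ U₁, q < b) ∧ (∀ b ∈ U₂, q ≤ b)}. If S is nonempty, then in the extended reals, ⨅ q ∈ S, (q : EReal) = ⨆ a ∈ L₁ ∪ L₂, (a : EReal), where the supremum over the empty set is −∞. -/
theorem inf_feasible_eq_max_lower_bounds (L₁ L₂ U₁ U₂ : Finset ℚ)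
    (S : Set ℚ)
    (hS : S = {q : ℚ | (∀ a ∈ L₁, a < q) ∧ (∀ a ∈ L₂, a ≤ q) ∧
      (∀ b ∈ U₁, q < b) ∧ (∀ b ∈ U₂, q ≤ b)})
    (hne : S.Nonempty) :
    ⨅ q ∈ S, ((q : ℝ) : EReal) = ⨆ a ∈ (L₁ ∪ L₂ : Finset ℚ), ((a : ℝ) : EReal) := by
  obtain ⟨q₀, hq₀⟩ := hne
  rw [hS] at hq₀
  obtain ⟨h1, h2, h3, h4⟩ := hq₀
  apply le_antisymm
  · -- inf ≤ sup of lower bounds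
    apply le_of_forall_gt_imp_ge_of_dense
    intro z hz
    obtain ⟨r, hr1, hr2⟩ := EReal.exists_rat_btwn_of_lt hz
    have hrS : min q₀ r ∈ S := by
      rw [hS]
      refine ⟨?_, ?_, ?_, ?_⟩
      · intro a ha
        have : ((a : ℝ) : EReal) < ((r : ℝ) : EReal) :=
          lt_of_le_of_lt (le_iSup₂ (f := fun (a : ℚ) (_ : a ∈ L₁ ∪ L₂) => ((a : ℝ) : EReal)) a
            (Finset.mem_union_left _ ha)) hr1
        have har : a < r := by exact_mod_cast this
        exact lt_min (h1 a ha) har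
      · intro a ha
        have : ((a : ℝ) : EReal) < ((r : ℝ) : EReal) :=
          lt_of_le_of_lt (le_iSup₂ (f := fun (a : ℚ) (_ : a ∈ L₁ ∪ L₂) => ((a : ℝ) : EReal)) a
            (Finset.mem_union_right _ ha)) hr1
        have har : a < r := by exact_mod_cast this
        exact le_min (h2 a ha) har.le
      · intro b hb; exact lt_of_le_of_lt (min_le_left _ _) (h3 b hb)
      · intro b hb; exact le_trans (min_le_left _ _) (h4 b hb)
    calc ⨅ q ∈ S, ((q : ℝ) : EReal) ≤ ((min q₀ r : ℚ) : ℝ) :=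
          iInf₂_le (min q₀ r) hrS
      _ ≤ ((r : ℝ) : EReal) := by exact_mod_cast min_le_right q₀ r
      _ ≤ z := hr2.le
  · -- sup ≤ inf
    apply iSup₂_le
    intro a ha
    apply le_iInf₂
    intro q hq
    rw [hS] at hq
    obtain ⟨g1, g2, _, _⟩ := hq
    have : a ≤ q := by
      rcases Finset.mem_union.1 ha with h | h
      · exact (g1 a h).le
      · exact g2 a h
    exact_mod_cast this
end

section
/- Let n ≥ 1 and let b : Fin n → EReal. Then (i) there is exactly one index k ∈ Fin n such that b j < b k for all j < k and b j ≤ b k for all j > k; and (ii) the sum over all k ∈ Fin n of (if (∀ j < k, b j < b k) ∧ (∀ j > k, b j ≤ b k) then b k else 0) equals ⨆ k, b k. -/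
open Classical in
theorem max_operator_correct (n : ℕ) (hn : 1 ≤ n) (b : Fin n → EReal) :
    (∃! k : Fin n, (∀ j, j < k → b j < b k) ∧ (∀ j, k < j → b j ≤ b k)) ∧
    (∑ k : Fin n,
        if (∀ j, j < k → b j < b k) ∧ (∀ j, k < j → b j ≤ b k) then b k else 0) =
      ⨆ k, b k := by
  haveI : Nonempty (Fin n) := ⟨⟨0, hn⟩⟩
  obtain ⟨m, -, hm⟩ := Finset.exists_max_image Finset.univ b ⟨⟨0, hn⟩, Finset.mem_univ _⟩
  set S : Finset (Fin n) := Finset.univ.filter (fun k => ∀ j, b j ≤ b k) with hS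
  have hSne : S.Nonempty := by
    refine ⟨m, ?_⟩
    simp only [hS, Finset.mem_filter, Finset.mem_univ, true_and]
    exact fun j => hm j (Finset.mem_univ j)
  obtain ⟨k, hkS, hkmin⟩ := S.exists_min_image id hSne
  have hkmax : ∀ j, b j ≤ b k := by
    simpa [hS] using hkS
  have hP : (∀ j, j < k → b j < b k) ∧ (∀ j, k < j → b j ≤ b k) := by
    constructor
    · intro j hj
      rcases lt_or_eq_of_le (hkmax j) with h | h
      · exact h
      · exfalso
        have hjS : j ∈ S := by
          simp only [hS, Finset.mem_filter, Finset.mem_univ, true_and]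
          intro i; rw [h]; exact hkmax i
        exact absurd (hkmin j hjS) (by simpa using not_le_of_gt hj)
    · intro j _; exact hkmax j
  have huniq : ∀ y : Fin n,
      ((∀ j, j < y → b j < b y) ∧ (∀ j, y < j → b j ≤ b y)) → y = k := by
    intro y hy
    rcases lt_trichotomy y k with h | h | h
    · exact absurd (hy.2 k h) (not_le_of_gt (hP.1 y h))
    · exact h
    · exact absurd (hP.2 y h) (not_le_of_gt (hy.1 k h))
  refine ⟨⟨k, hP, huniq⟩, ?_⟩
  have hsum : (∑ k : Fin n,
      if (∀ j, j < k → b j < b k) ∧ (∀ j, k < j → b j ≤ b k) then b k else 0) = b k := by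
    rw [Fintype.sum_eq_single k]
    · rw [if_pos hP]
    · intro j hj
      rw [if_neg]
      intro hPj
      exact hj (huniq j hPj)
  rw [hsum]
  exact le_antisymm (le_iSup b k) (iSup_le hkmax)
end

section
/- Let V be a finite type of variables, let f, f' : (V → ℚ) → EReal satisfy f σ ≤ f' σ for all σ, and let A, B ⊆ V be such that f depends only on A and f' depends only on B. Define g : (V → ℚ) → EReal by g σ = ⨆ over all τ : V → ℚ with τ x = σ x for every x ∉ A \ B, of f τ. Then: f σ ≤ g σ for all σ; g σ ≤ f' σ for all σ; and g depends only on A ∩ B. In particular, g is a quantitative Craig interpolant of (f, f'). -/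
theorem craig_interpolant_sup (V : Type*) [Fintype V]
    (f f' : (V → ℚ) → EReal) (hent : ∀ σ, f σ ≤ f' σ)
    (A B : Set V)
    (hfA : ∀ σ τ : V → ℚ, (∀ x ∈ A, σ x = τ x) → f σ = f τ)
    (hf'B : ∀ σ τ : V → ℚ, (∀ x ∈ B, σ x = τ x) → f' σ = f' τ)
    (g : (V → ℚ) → EReal)
    (hg : ∀ σ, g σ = ⨆ τ ∈ {τ : V → ℚ | ∀ x ∉ A \ B, τ x = σ x}, f τ) :
    (∀ σ, f σ ≤ g σ) ∧ (∀ σ, g σ ≤ f' σ) ∧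
      (∀ σ τ : V → ℚ, (∀ x ∈ A ∩ B, σ x = τ x) → g σ = g τ) := by
  classical
  refine ⟨?_, ?_, ?_⟩
  · intro σ
    rw [hg]
    exact le_iSup₂ (f := fun τ _ => f τ) σ (fun x _ => rfl)
  · intro σ
    rw [hg]
    refine iSup₂_le fun τ hτ => ?_
    calc f τ ≤ f' τ := hent τ
      _ = f' σ := hf'B τ σ (fun x hx => hτ x (fun h => h.2 hx))
  · intro σ τ h
    have key : ∀ σ τ : V → ℚ, (∀ x ∈ A ∩ B, σ x = τ x) → g σ ≤ g τ := by
      intro σ τ h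
      rw [hg, hg]
      refine iSup₂_le fun ρ hρ => ?_
      set ρ' : V → ℚ := fun x => if x ∈ A \ B then ρ x else τ x with hρ'
      have h1 : f ρ = f ρ' := by
        refine hfA ρ ρ' fun x hxA => ?_
        by_cases hxB : x ∈ B
        · simp only [hρ', Set.mem_diff, hxA, hxB, not_true, and_false, if_false]
          rw [hρ x (fun hc => hc.2 hxB)]
          exact h x ⟨hxA, hxB⟩
        · simp [hρ', Set.mem_diff, hxA, hxB]
      rw [h1]
      exact le_iSup₂ (f := fun τ _ => f τ) ρ' (fun x hx => if_neg hx)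
    exact le_antisymm (key σ τ h) (key τ σ fun x hx => (h x hx).symm)
end

section
/- Let V be a finite type of variables, let f, f' : (V → ℚ) → EReal satisfy f σ ≤ f' σ for all σ, and let A, B ⊆ V be such that f depends only on A and f' depends only on B. Define g : (V → ℚ) → EReal by g σ = ⨆ over all τ : V → ℚ with τ x = σ x for every x ∉ A \ B, of f τ. Then g is the strongest quantitative Craig interpolant of (f, f'): for every g' : (V → ℚ) → EReal that depends only on A ∩ B and satisfies f σ ≤ g' σ and g' σ ≤ f' σ for all σ, we have g σ ≤ g' σ for all σ. -/
theorem craig_interpolant_sup_strongest (V : Type*) [Fintype V]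
    (f f' : (V → ℚ) → EReal) (hent : ∀ σ, f σ ≤ f' σ)
    (A B : Set V)
    (hfA : ∀ σ τ : V → ℚ, (∀ x ∈ A, σ x = τ x) → f σ = f τ)
    (hf'B : ∀ σ τ : V → ℚ, (∀ x ∈ B, σ x = τ x) → f' σ = f' τ)
    (g : (V → ℚ) → EReal)
    (hg : ∀ σ, g σ = ⨆ τ ∈ {τ : V → ℚ | ∀ x ∉ A \ B, τ x = σ x}, f τ) :
    ∀ g' : (V → ℚ) → EReal,
      (∀ σ τ : V → ℚ, (∀ x ∈ A ∩ B, σ x = τ x) → g' σ = g' τ) →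
      (∀ σ, f σ ≤ g' σ) → (∀ σ, g' σ ≤ f' σ) →
      ∀ σ, g σ ≤ g' σ := by
  intro g' hg'AB hfg' _ σ
  rw [hg σ]
  refine iSup₂_le fun τ hτ => ?_
  have h : g' τ = g' σ := hg'AB τ σ fun x hx => hτ x fun hd => hd.2 hx.2
  exact h ▸ hfg' τ
end

section
/- Let V be a finite type of variables, let f, f' : (V → ℚ) → EReal satisfy f σ ≤ f' σ for all σ, and let A, B ⊆ V be such that f depends only on A and f' depends only on B. Define h : (V → ℚ) → EReal by h σ = ⨅ over all τ : V → ℚ with τ x = σ x for every x ∉ B \ A, of f' τ. Then: f σ ≤ h σ for all σ; h σ ≤ f' σ for all σ; and h depends only on A ∩ B. In particular, h is a quantitative Craig interpolant of (f, f'). -/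
theorem craig_interpolant_inf (V : Type*) [Fintype V]
    (f f' : (V → ℚ) → EReal) (hent : ∀ σ, f σ ≤ f' σ)
    (A B : Set V)
    (hfA : ∀ σ τ : V → ℚ, (∀ x ∈ A, σ x = τ x) → f σ = f τ)
    (hf'B : ∀ σ τ : V → ℚ, (∀ x ∈ B, σ x = τ x) → f' σ = f' τ)
    (h : (V → ℚ) → EReal)
    (hh : ∀ σ, h σ = ⨅ τ ∈ {τ : V → ℚ | ∀ x ∉ B \ A, τ x = σ x}, f' τ) :
    (∀ σ, f σ ≤ h σ) ∧ (∀ σ, h σ ≤ f' σ) ∧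
      (∀ σ τ : V → ℚ, (∀ x ∈ A ∩ B, σ x = τ x) → h σ = h τ) := by
  classical
  have key : ∀ σ τ : V → ℚ, (∀ x ∈ A ∩ B, σ x = τ x) → h σ ≤ h τ := by
    intro σ τ hστ
    rw [hh, hh]
    refine le_iInf₂ fun τ' hτ' => ?_
    set σ' : V → ℚ := fun x => if x ∈ B \ A then τ' x else σ x with hσ'
    have hmem : σ' ∈ {τ : V → ℚ | ∀ x ∉ B \ A, τ x = σ x} := by
      intro x hx; simp only [hσ', if_neg hx]
    refine le_trans (iInf₂_le σ' hmem) (le_of_eq ?_)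
    apply hf'B
    intro x hxB
    by_cases hxA : x ∈ A
    · have h1 : x ∉ B \ A := fun hc => hc.2 hxA
      simp only [hσ', if_neg h1]
      rw [hστ x ⟨hxA, hxB⟩, hτ' x h1]
    · simp only [hσ', if_pos (Set.mem_diff_of_mem hxB hxA)]
  refine ⟨fun σ => ?_, fun σ => ?_, fun σ τ hστ => le_antisymm (key σ τ hστ)
    (key τ σ fun x hx => (hστ x hx).symm)⟩
  · rw [hh]
    refine le_iInf₂ fun τ hτ => ?_
    have : f σ = f τ := hfA σ τ fun x hx => (hτ x fun hc => hc.2 hx).symm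
    exact this ▸ hent τ
  · rw [hh]
    exact iInf₂_le σ fun x _ => rfl
end

section
/- Let V be a finite type of variables, let f, f' : (V → ℚ) → EReal satisfy f σ ≤ f' σ for all σ, and let A, B ⊆ V be such that f depends only on A and f' depends only on B. Define h : (V → ℚ) → EReal by h σ = ⨅ over all τ : V → ℚ with τ x = σ x for every x ∉ B \ A, of f' τ. Then h is the weakest quantitative Craig interpolant of (f, f'): for every g' : (V → ℚ) → EReal that depends only on A ∩ B and satisfies f σ ≤ g' σ and g' σ ≤ f' σ for all σ, we have g' σ ≤ h σ for all σ. -/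
theorem craig_interpolant_inf_weakest (V : Type*) [Fintype V]
    (f f' : (V → ℚ) → EReal) (hent : ∀ σ, f σ ≤ f' σ)
    (A B : Set V)
    (hfA : ∀ σ τ : V → ℚ, (∀ x ∈ A, σ x = τ x) → f σ = f τ)
    (hf'B : ∀ σ τ : V → ℚ, (∀ x ∈ B, σ x = τ x) → f' σ = f' τ)
    (h : (V → ℚ) → EReal)
    (hh : ∀ σ, h σ = ⨅ τ ∈ {τ : V → ℚ | ∀ x ∉ B \ A, τ x = σ x}, f' τ) :
    ∀ g' : (V → ℚ) → EReal,
      (∀ σ τ : V → ℚ, (∀ x ∈ A ∩ B, σ x = τ x) → g' σ = g' τ) →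
      (∀ σ, f σ ≤ g' σ) → (∀ σ, g' σ ≤ f' σ) →
      ∀ σ, g' σ ≤ h σ := by
  intro g' hg'AB hfg' hg'f' σ
  rw [hh]
  refine le_iInf₂ fun τ hτ => ?_
  have : g' σ = g' τ := by
    apply hg'AB
    intro x hx
    exact (hτ x (fun hxd => hxd.2 hx.1)).symm
  rw [this]
  exact hg'f' τ
end
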